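/- Let L ≡ 2 or 3 (mod 4) and z = 6L+2. There is no choice of integers s_{i1} < s_{i2} < s_{i3} in {0,...,z-1} for i = 1,...,L such that the 6L differences (s_{ij} - s_{ik}) mod z, for i = 1,...,L and j ≠ k, are pairwise distinct. -/

import Mathlib

/-- The multiset of all differences of distinct shift values within each circulant,
reduced modulo `z`: for each `i = 1, ..., L`, the six differences
`s i j - s i k` (`j ≠ k`, `j, k ∈ {1, 2, 3}`). -/
def shiftDiffsMod (L z : ℕ) (s : ℕ → ℕ → ℕ) : Multiset (ZMod z) :=
  (Finset.Icc 1 L).val.bind fun i =>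
    (((Finset.Icc 1 3) ×ˢ (Finset.Icc 1 3)).filter (fun p => p.1 ≠ p.2)).val.map
      fun p => ((s i p.1 : ZMod z) - (s i p.2 : ZMod z))

lemma pairs_eq : ((Finset.Icc 1 3) ×ˢ (Finset.Icc 1 3)).filter (fun p : ℕ×ℕ => p.1 ≠ p.2)
    = ({(1,2),(1,3),(2,1),(2,3),(3,1),(3,2)} : Finset (ℕ×ℕ)) := by decide

lemma count6 (a b c : ZMod 2) :
    (Multiset.count (1 : ZMod 2) {a-b, a-c, b-a, b-c, c-a, c-b}) % 4 = 0 := by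
  revert a b c; decide

lemma count_inner (z : ℕ) (h2 : (2:ℕ) ∣ z) (t : ℕ → ℕ) :
    (Multiset.count 1 ((((Finset.Icc 1 3) ×ˢ (Finset.Icc 1 3)).filter
        (fun p : ℕ×ℕ => p.1 ≠ p.2)).val.map
      (fun p => (ZMod.castHom h2 (ZMod 2)) ((t p.1 : ZMod z) - (t p.2 : ZMod z))))) % 4 = 0 := by
  rw [pairs_eq]
  have : ∀ p : ℕ × ℕ, (ZMod.castHom h2 (ZMod 2)) ((t p.1 : ZMod z) - (t p.2 : ZMod z))
      = ((t p.1 : ZMod 2) - (t p.2 : ZMod 2)) := by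
    intro p; rw [map_sub, map_natCast, map_natCast]
  simp only [this]
  have := count6 (t 1 : ZMod 2) (t 2) (t 3)
  convert this using 2
  rfl

lemma fiber_card (z : ℕ) [NeZero z] (h2 : (2:ℕ) ∣ z) :
    2 * ((Finset.univ.filter (fun x : ZMod z => ZMod.castHom h2 (ZMod 2) x = 1)).card) = z := by
  set f := ZMod.castHom h2 (ZMod 2) with hf
  have h01 : ∀ a : ZMod 2, ¬ a = 1 ↔ a = 0 := by decide
  have hpartition := Finset.card_filter_add_card_filter_not
    (s := (Finset.univ : Finset (ZMod z))) (p := fun x => f x = 1)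
  simp only [h01] at hpartition
  have hbij : (Finset.univ.filter (fun x : ZMod z => f x = 0)).card
      = (Finset.univ.filter (fun x : ZMod z => f x = 1)).card := by
    apply Finset.card_nbij' (fun x => x + 1) (fun y => y - 1)
    · intro a ha
      simp only [Finset.mem_coe, Finset.mem_filter, Finset.mem_univ, true_and] at ha ⊢
      rw [map_add, ha, map_one, zero_add]
    · intro a ha
      simp only [Finset.mem_coe, Finset.mem_filter, Finset.mem_univ, true_and] at ha ⊢
      rw [map_sub, ha, map_one, sub_self]
    · intro a _; simp
    · intro a _; simp
  rw [Finset.card_univ, ZMod.card] at hpartition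
  omega

/-- For `L ≡ 2` or `3 (mod 4)` and `z = 6L+2`, there is no choice of shift values
`s i 1 < s i 2 < s i 3` in `{0, ..., z-1}` making all `6L` within-circulant differences
modulo `z` pairwise distinct. -/
theorem stmt_13 (L : ℕ) (hL : L % 4 = 2 ∨ L % 4 = 3) (s : ℕ → ℕ → ℕ)
    (hs : ∀ i ∈ Finset.Icc 1 L,
      s i 1 < s i 2 ∧ s i 2 < s i 3 ∧ s i 3 < 6 * L + 2) :
    ¬ (shiftDiffsMod L (6 * L + 2) s).Nodup := by
  intro hnd
  haveI : NeZero (6 * L + 2) := ⟨by omega⟩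
  have h2 : (2:ℕ) ∣ 6 * L + 2 := ⟨3 * L + 1, by ring⟩
  set f := ZMod.castHom h2 (ZMod 2) with hf
  set M := shiftDiffsMod L (6 * L + 2) s with hMdef
  -- Side A: the count of odd differences is divisible by 4
  have hA : 4 ∣ Multiset.count 1 (M.map f) := by
    rw [hMdef, shiftDiffsMod, Multiset.map_bind, Multiset.count_bind]
    apply Multiset.dvd_sum
    intro x hx
    rw [Multiset.mem_map] at hx
    obtain ⟨i, _, rfl⟩ := hx
    rw [Multiset.map_map]
    exact Nat.dvd_of_mod_eq_zero (count_inner (6 * L + 2) h2 (s i))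
  -- distinctness of s-values used below
  have hslt : ∀ i ∈ Finset.Icc 1 L, ∀ j ∈ Finset.Icc 1 3, s i j < 6 * L + 2 := by
    intro i hi j hj
    obtain ⟨h1, h2', h3⟩ := hs i hi
    simp only [Finset.mem_Icc] at hj
    obtain ⟨hj1, hj2⟩ := hj
    interval_cases j <;> omega
  have hsne : ∀ i ∈ Finset.Icc 1 L, ∀ j ∈ Finset.Icc 1 3, ∀ k ∈ Finset.Icc 1 3,
      j ≠ k → s i j ≠ s i k := by
    intro i hi j hj k hk hjk
    obtain ⟨h1, h2', h3⟩ := hs i hi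
    simp only [Finset.mem_Icc] at hj hk
    obtain ⟨hj1, hj2⟩ := hj
    obtain ⟨hk1, hk2⟩ := hk
    interval_cases j <;> interval_cases k <;> omega
  -- 0 is not a difference
  have hM0 : (0 : ZMod (6 * L + 2)) ∉ M := by
    intro h0
    rw [hMdef, shiftDiffsMod, Multiset.mem_bind] at h0
    obtain ⟨i, hi, h0⟩ := h0
    rw [Multiset.mem_map] at h0
    obtain ⟨p, hp, h0⟩ := h0
    rw [← Finset.mem_def, Finset.mem_filter, Finset.mem_product] at hp
    have hi' : i ∈ Finset.Icc 1 L := hi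
    have heq : ((s i p.1 : ZMod (6 * L + 2))) = ((s i p.2 : ZMod (6 * L + 2))) := by
      have := sub_eq_zero.mp h0
      exact this
    have hv1 := ZMod.val_cast_of_lt (hslt i hi' p.1 hp.1.1)
    have hv2 := ZMod.val_cast_of_lt (hslt i hi' p.2 hp.1.2)
    have : s i p.1 = s i p.2 := by rw [← hv1, ← hv2, heq]
    exact hsne i hi' p.1 hp.1.1 p.2 hp.1.2 hp.2 this
  -- M is closed under negation
  have hneg : ∀ x ∈ M, -x ∈ M := by
    intro x hx
    rw [hMdef, shiftDiffsMod, Multiset.mem_bind] at hx ⊢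
    obtain ⟨i, hi, hx⟩ := hx
    rw [Multiset.mem_map] at hx
    obtain ⟨p, hp, rfl⟩ := hx
    refine ⟨i, hi, ?_⟩
    rw [Multiset.mem_map]
    refine ⟨(p.2, p.1), ?_, by simp [neg_sub]⟩
    rw [← Finset.mem_def, Finset.mem_filter, Finset.mem_product] at hp ⊢
    exact ⟨⟨hp.1.2, hp.1.1⟩, fun h => hp.2 h.symm⟩
  -- cardinality of M
  have hcard : Multiset.card M = 6 * L := by
    rw [hMdef, shiftDiffsMod, Multiset.card_bind]
    have : ∀ i : ℕ, (Multiset.card ((((Finset.Icc 1 3) ×ˢ (Finset.Icc 1 3)).filter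
        (fun p : ℕ×ℕ => p.1 ≠ p.2)).val.map
        (fun p => ((s i p.1 : ZMod (6*L+2)) - (s i p.2 : ZMod (6*L+2)))))) = 6 := by
      intro i
      rw [Multiset.card_map, pairs_eq]
      decide
    have h6 := Multiset.map_congr (f := Multiset.card ∘ fun i =>
        ((((Finset.Icc 1 3) ×ˢ (Finset.Icc 1 3)).filter (fun p : ℕ×ℕ => p.1 ≠ p.2)).val.map
        (fun p => ((s i p.1 : ZMod (6*L+2)) - (s i p.2 : ZMod (6*L+2))))))
      (g := fun _ : ℕ => 6) (rfl : (Finset.Icc 1 L).val = (Finset.Icc 1 L).val)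
      (fun i _ => this i)
    rw [h6, Multiset.map_const', Multiset.sum_replicate, smul_eq_mul,
      ← Finset.card_def, Nat.card_Icc]
    omega
  -- the finset of differences
  let F : Finset (ZMod (6 * L + 2)) := ⟨M, hnd⟩
  have hFcard : F.card = 6 * L := hcard
  have hmemF : ∀ x, x ∈ F ↔ x ∈ M := fun x => Iff.rfl
  -- the unique missing nonzero element
  have hcardA : (Finset.univ \ insert 0 F).card = 1 := by
    rw [Finset.card_sdiff_of_subset (Finset.subset_univ _), Finset.card_insert_of_notMem hM0,
      Finset.card_univ, ZMod.card, hFcard]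
    omega
  obtain ⟨t, ht⟩ := Finset.card_eq_one.mp hcardA
  have htmem : t ∈ Finset.univ \ insert 0 F := ht ▸ Finset.mem_singleton_self t
  rw [Finset.mem_sdiff, Finset.mem_insert] at htmem
  push_neg at htmem
  obtain ⟨-, ht0, htF⟩ := htmem
  have hnegt : -t = t := by
    have : -t ∈ Finset.univ \ insert 0 F := by
      rw [Finset.mem_sdiff, Finset.mem_insert]
      refine ⟨Finset.mem_univ _, ?_⟩
      push_neg
      refine ⟨fun h => ht0 (by rwa [neg_eq_zero] at h), fun h => ?_⟩
      exact htF ((hmemF _).mpr (by simpa using hneg _ ((hmemF _).mp h)))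
    rw [ht, Finset.mem_singleton] at this
    exact this
  -- t = 3L+1
  have htval : t = ((3 * L + 1 : ℕ) : ZMod (6 * L + 2)) := by
    have h2t : t + t = 0 := by nth_rewrite 1 [← hnegt]; exact neg_add_cancel t
    have hvt : ((t.val : ℕ) : ZMod (6 * L + 2)) = t := ZMod.natCast_rightInverse t
    have : (((t.val + t.val : ℕ)) : ZMod (6 * L + 2)) = 0 := by
      push_cast
      rw [hvt, h2t]
    rw [ZMod.natCast_eq_zero_iff] at this
    have hlt := ZMod.val_lt t
    have hne : t.val ≠ 0 := fun h => ht0 (by rw [← hvt, h, Nat.cast_zero])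
    obtain ⟨k, hk⟩ := this
    have : t.val = 3 * L + 1 := by
      rcases Nat.lt_or_ge k 2 with hk2 | hk2
      · interval_cases k <;> omega
      · nlinarith
    rw [← hvt, this]
  -- F = univ \ {0, t}
  have hFeq : F = Finset.univ \ ({0, t} : Finset (ZMod (6 * L + 2))) := by
    apply Finset.eq_of_subset_of_card_le
    · intro x hx
      rw [Finset.mem_sdiff, Finset.mem_insert, Finset.mem_singleton]
      refine ⟨Finset.mem_univ _, ?_⟩
      push_neg
      exact ⟨fun h => hM0 (h ▸ (hmemF x).mp hx), fun h => htF (h ▸ hx)⟩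
    · rw [Finset.card_sdiff_of_subset (Finset.subset_univ _), Finset.card_univ, ZMod.card, hFcard]
      have : ({0, t} : Finset (ZMod (6 * L + 2))).card = 2 := by
        rw [Finset.card_insert_of_notMem (by simpa using (Ne.symm ht0)), Finset.card_singleton]
      omega
  -- count of odd elements via the finset
  have hN : Multiset.count 1 (M.map f) = (F.filter (fun x => f x = 1)).card := by
    rw [Multiset.count_map]
    have : (F.filter (fun x => f x = 1)).card
        = Multiset.card (M.filter (fun x => f x = 1)) := rfl
    rw [this]
    congr 1
    apply Multiset.filter_congr
    intro x _
    exact eq_comm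
  -- compute the count
  have hfib := fiber_card (6 * L + 2) h2
  rw [← hf] at hfib
  have hsplit : (Finset.univ.filter (fun x : ZMod (6*L+2) => f x = 1)).card
      = (F.filter (fun x => f x = 1)).card
        + (({0, t} : Finset (ZMod (6*L+2))).filter (fun x => f x = 1)).card := by
    rw [hFeq, ← Finset.card_union_of_disjoint, ← Finset.filter_union,
      Finset.sdiff_union_of_subset (Finset.subset_univ _)]
    exact Finset.disjoint_filter_filter (Finset.sdiff_disjoint)
  have hf0 : f (0 : ZMod (6*L+2)) ≠ 1 := by
    rw [map_zero]; decide
  have hft : f t = ((3 * L + 1 : ℕ) : ZMod 2) := by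
    rw [htval, map_natCast]
  have hcast2 : ((3 * L + 1 : ℕ) : ZMod 2) = (((3 * L + 1) % 2 : ℕ) : ZMod 2) :=
    (ZMod.natCast_mod _ 2).symm
  -- case analysis on L mod 4
  have hsmall : (({0, t} : Finset (ZMod (6*L+2))).filter (fun x => f x = 1)).card
      = (3 * L + 1) % 2 := by
    rcases Nat.even_or_odd L with ⟨m, hm⟩ | ⟨m, hm⟩
    · have hmod : (3 * L + 1) % 2 = 1 := by omega
      have hft1 : f t = 1 := by
        rw [hft, hcast2, hmod]; norm_num
      rw [hmod]
      rw [Finset.filter_insert, if_neg hf0, Finset.filter_singleton, if_pos hft1,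
        Finset.card_singleton]
    · have hmod : (3 * L + 1) % 2 = 0 := by omega
      have hft1 : f t ≠ 1 := by
        rw [hft, hcast2, hmod]; norm_num
      rw [hmod]
      rw [Finset.filter_insert, if_neg hf0, Finset.filter_singleton, if_neg hft1,
        Finset.card_empty]
  rw [hsmall] at hsplit
  rw [hN] at hA
  omega
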